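/- arXiv:1412.3428 — 2 statements merged into one kernel-verified Lean document; each statement's English description precedes it below -/
import Mathlib

section
/- The group $\mathrm{GL}(n,\mathbb{C})$ acts transitively on triples $(F_0, F_1, L)$ in general position, where $F_0, F_1$ are complete flags in $\mathbb{C}^n$ and $L$ is a line, general position meaning $\dim\langle F_0^{j_0}, F_1^{j_1}\rangle = \min\{j_0+j_1, n\}$ and $\dim\langle F_0^{j_0}, F_1^{j_1}, L\rangle = \min\{j_0+j_1+1, n\}$ for all $0 \leq j_0, j_1 \leq n$. -/
/-- A complete flag in `ℂⁿ`, given as an increasing chain of subspaces with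
`dim Fʲ = j` for `0 ≤ j ≤ n`. -/
def IsCompleteFlag (n : ℕ) (F : ℕ → Submodule ℂ (Fin n → ℂ)) : Prop :=
  (∀ j, F j ≤ F (j + 1)) ∧ ∀ j, j ≤ n → Module.finrank ℂ (F j) = j

/-- General position of a triple (flag, flag, line). -/
def GenPosTriple (n : ℕ) (F0 F1 : ℕ → Submodule ℂ (Fin n → ℂ))
    (L : Submodule ℂ (Fin n → ℂ)) : Prop :=
  ∀ j0 j1 : ℕ, j0 ≤ n → j1 ≤ n →
    Module.finrank ℂ ↥(F0 j0 ⊔ F1 j1) = min (j0 + j1) n ∧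
    Module.finrank ℂ ↥(F0 j0 ⊔ F1 j1 ⊔ L) = min (j0 + j1 + 1) n

lemma flag_mono {n : ℕ} {F : ℕ → Submodule ℂ (Fin n → ℂ)} (hF : IsCompleteFlag n F) :
    Monotone F :=
  monotone_nat_of_le_succ hF.1

lemma sup_span_singleton_eq {n : ℕ} {A B : Submodule ℂ (Fin n → ℂ)} {x : Fin n → ℂ}
    (hxB : x ∈ B) (hAB : A ≤ B) (hd : A ⊓ Submodule.span ℂ {x} = ⊥) (hx : x ≠ 0)
    (hr : Module.finrank ℂ B ≤ Module.finrank ℂ A + 1) :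
    A ⊔ Submodule.span ℂ {x} = B := by
  apply Submodule.eq_of_le_of_finrank_le
    (sup_le hAB (Submodule.span_le.2 (by simpa using hxB)))
  have h := Submodule.finrank_sup_add_finrank_inf_eq A (Submodule.span ℂ {x})
  rw [hd, finrank_span_singleton hx] at h
  simp only [finrank_bot, add_zero] at h
  omega

lemma exists_adapted_basis (n : ℕ) (F0 F1 : ℕ → Submodule ℂ (Fin n → ℂ))
    (L : Submodule ℂ (Fin n → ℂ))
    (hF0 : IsCompleteFlag n F0) (hF1 : IsCompleteFlag n F1)
    (hL : Module.finrank ℂ L = 1) (hF : GenPosTriple n F0 F1 L) :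
    ∃ b : Module.Basis (Fin n) ℂ (Fin n → ℂ),
      (∀ j ≤ n, F0 j = Submodule.span ℂ (⇑b '' {i | (i : ℕ) < j})) ∧
      (∀ j ≤ n, F1 j = Submodule.span ℂ (⇑b '' {i | n - j ≤ (i : ℕ)})) ∧
      L = Submodule.span ℂ {∑ i, b i} := by
  have hVn : Module.finrank ℂ (Fin n → ℂ) = n := Module.finrank_fin_fun ℂ
  have hn : 1 ≤ n := by
    have h := Submodule.finrank_le L
    rw [hL, hVn] at h; exact h
  -- dimension of intersections
  have hinf : ∀ j0 j1 : ℕ, j0 ≤ n → j1 ≤ n →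
      Module.finrank ℂ ↥(F0 j0 ⊓ F1 j1) + min (j0 + j1) n = j0 + j1 := by
    intro j0 j1 h0 h1
    have h := Submodule.finrank_sup_add_finrank_inf_eq (F0 j0) (F1 j1)
    rw [hF0.2 j0 h0, hF1.2 j1 h1, (hF j0 j1 h0 h1).1] at h
    omega
  have hbot : ∀ j0 j1 : ℕ, j0 ≤ n → j1 ≤ n → j0 + j1 ≤ n → F0 j0 ⊓ F1 j1 = ⊥ := by
    intro j0 j1 h0 h1 hs
    have h := hinf j0 j1 h0 h1
    rw [min_eq_left hs] at h
    exact Submodule.finrank_eq_zero.mp (by omega)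
  -- choose the adapted vectors
  have hone : ∀ i : Fin n, ∃ x, x ∈ F0 ((i : ℕ) + 1) ⊓ F1 (n - (i : ℕ)) ∧ x ≠ 0 := by
    intro i
    have hi : (i : ℕ) < n := i.2
    have h := hinf ((i : ℕ) + 1) (n - (i : ℕ)) (by omega) (by omega)
    have hm : min ((i : ℕ) + 1 + (n - (i : ℕ))) n = n := by omega
    rw [hm] at h
    have hr : Module.finrank ℂ ↥(F0 ((i : ℕ) + 1) ⊓ F1 (n - (i : ℕ))) = 1 := by omega
    have hne : F0 ((i : ℕ) + 1) ⊓ F1 (n - (i : ℕ)) ≠ ⊥ := by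
      intro hb; rw [hb] at hr; simp at hr
    obtain ⟨x, hx, hx0⟩ := Submodule.exists_mem_ne_zero_of_ne_bot hne
    exact ⟨x, hx, hx0⟩
  choose e hmem hne using hone
  have hmem0 : ∀ i : Fin n, e i ∈ F0 ((i : ℕ) + 1) := fun i => (hmem i).1
  have hmem1 : ∀ i : Fin n, e i ∈ F1 (n - (i : ℕ)) := fun i => (hmem i).2
  -- spans of initial segments
  have span0 : ∀ k, k ≤ n → Submodule.span ℂ (e '' {i | (i : ℕ) < k}) = F0 k := by
    intro k
    induction k with
    | zero =>
      intro _
      have hset : {i : Fin n | (i : ℕ) < 0} = ∅ := by ext i; simp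
      rw [hset, Set.image_empty, Submodule.span_empty]
      exact (Submodule.finrank_eq_zero.mp (hF0.2 0 (by omega))).symm
    | succ k ih =>
      intro hk
      have hk' : k ≤ n := by omega
      have hkn : k < n := by omega
      have hset : {i : Fin n | (i : ℕ) < k + 1} =
          insert (⟨k, hkn⟩ : Fin n) ({i : Fin n | (i : ℕ) < k} : Set (Fin n)) := by
        ext i; simp only [Set.mem_setOf_eq, Set.mem_insert_iff, Fin.ext_iff]; omega
      rw [hset, Set.image_insert_eq, Submodule.span_insert, ih hk', sup_comm]
      have hd : F0 k ⊓ Submodule.span ℂ {e ⟨k, hkn⟩} = ⊥ := by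
        rw [← le_bot_iff, ← hbot k (n - k) hk' (by omega) (by omega)]
        exact inf_le_inf_left _ (Submodule.span_le.2 (by simpa using hmem1 ⟨k, hkn⟩))
      exact sup_span_singleton_eq (hmem0 ⟨k, hkn⟩) (hF0.1 k) hd (hne _)
        (by rw [hF0.2 (k + 1) hk, hF0.2 k hk'])
  have span1 : ∀ k, k ≤ n → Submodule.span ℂ (e '' {i | n - k ≤ (i : ℕ)}) = F1 k := by
    intro k
    induction k with
    | zero =>
      intro _
      have hset : {i : Fin n | n - 0 ≤ (i : ℕ)} = ∅ := by
        ext i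
        simp only [Set.mem_setOf_eq, Set.mem_empty_iff_false, iff_false, not_le, Nat.sub_zero]
        exact i.2
      rw [hset, Set.image_empty, Submodule.span_empty]
      exact (Submodule.finrank_eq_zero.mp (hF1.2 0 (by omega))).symm
    | succ k ih =>
      intro hk
      have hk' : k ≤ n := by omega
      have hlt : n - k - 1 < n := by omega
      have hset : {i : Fin n | n - (k + 1) ≤ (i : ℕ)} =
          insert (⟨n - k - 1, hlt⟩ : Fin n) ({i : Fin n | n - k ≤ (i : ℕ)} : Set (Fin n)) := by
        ext i; have := i.2
        simp only [Set.mem_setOf_eq, Set.mem_insert_iff, Fin.ext_iff]; omega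
      rw [hset, Set.image_insert_eq, Submodule.span_insert, ih hk', sup_comm]
      have hx1 : e ⟨n - k - 1, hlt⟩ ∈ F1 (k + 1) := by
        have h := hmem1 ⟨n - k - 1, hlt⟩
        have : n - (n - k - 1) = k + 1 := by omega
        rwa [this] at h
      have hx0 : e ⟨n - k - 1, hlt⟩ ∈ F0 (n - k) := by
        have h := hmem0 ⟨n - k - 1, hlt⟩
        have : (n - k - 1) + 1 = n - k := by omega
        rwa [this] at h
      have hd : F1 k ⊓ Submodule.span ℂ {e ⟨n - k - 1, hlt⟩} = ⊥ := by
        rw [← le_bot_iff, ← hbot (n - k) k (by omega) hk' (by omega), inf_comm (F0 (n - k))]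
        exact inf_le_inf_left _ (Submodule.span_le.2 (by simpa using hx0))
      exact sup_span_singleton_eq hx1 (hF1.1 k) hd (hne _)
        (by rw [hF1.2 (k + 1) hk, hF1.2 k hk'])
  -- e spans everything, so it is a basis
  have htop : ⊤ ≤ Submodule.span ℂ (Set.range e) := by
    have huniv : Set.range e = e '' {i : Fin n | (i : ℕ) < n} := by
      rw [show {i : Fin n | (i : ℕ) < n} = Set.univ from by ext i; simp [i.2], Set.image_univ]
    rw [huniv, span0 n le_rfl]
    exact (Submodule.eq_top_of_finrank_eq (by rw [hF0.2 n le_rfl, hVn])).ge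
  let b : Module.Basis (Fin n) ℂ (Fin n → ℂ) :=
    basisOfTopLeSpanOfCardEqFinrank e htop (by simp [hVn])
  have hb : ⇑b = e := coe_basisOfTopLeSpanOfCardEqFinrank e htop _
  -- a nonzero vector of L
  obtain ⟨v, hvL, hv0⟩ := Submodule.exists_mem_ne_zero_of_ne_bot
    (show L ≠ ⊥ by intro h; rw [h] at hL; simp at hL)
  have hLv : L = Submodule.span ℂ {v} :=
    (Submodule.eq_of_le_of_finrank_le (Submodule.span_le.2 (by simpa using hvL))
      (by rw [finrank_span_singleton hv0, hL])).symm
  -- all coordinates of v are nonzero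
  have hc : ∀ i : Fin n, b.repr v i ≠ 0 := by
    intro i hci
    have hi : (i : ℕ) < n := i.2
    have hvmem : v ∈ Submodule.span ℂ (⇑b '' {j | j ≠ i}) := by
      rw [Module.Basis.mem_span_image]
      intro j hj
      simp only [Finset.mem_coe, Finsupp.mem_support_iff] at hj
      simp only [Set.mem_setOf_eq]
      intro hji; exact hj (hji ▸ hci)
    have hsub : Submodule.span ℂ (⇑b '' {j | j ≠ i}) ≤ F0 (i : ℕ) ⊔ F1 (n - 1 - (i : ℕ)) := by
      rw [Submodule.span_le]
      rintro x ⟨j, hj, rfl⟩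
      rw [hb]
      rcases lt_or_gt_of_ne (show j ≠ i from hj) with h | h
      · exact Submodule.mem_sup_left
          (flag_mono hF0 (show (j : ℕ) + 1 ≤ (i : ℕ) from h) (hmem0 j))
      · refine Submodule.mem_sup_right (flag_mono hF1 ?_ (hmem1 j))
        have : (i : ℕ) < (j : ℕ) := h
        omega
    have hLle : L ≤ F0 (i : ℕ) ⊔ F1 (n - 1 - (i : ℕ)) := by
      rw [hLv, Submodule.span_le]
      exact Set.singleton_subset_iff.2 (hsub hvmem)
    have h1 := (hF (i : ℕ) (n - 1 - (i : ℕ)) (by omega) (by omega)).1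
    have h2 := (hF (i : ℕ) (n - 1 - (i : ℕ)) (by omega) (by omega)).2
    have hLle' : L ≤ F0 (i : ℕ) ⊔ F1 (n - 1 - (i : ℕ)) := hLle
    rw [sup_of_le_left hLle'] at h2
    rw [h1] at h2
    omega
  -- rescale the basis so that the coordinates of v are all 1
  let u : Fin n → ℂˣ := fun i => Units.mk0 (b.repr v i) (hc i)
  let bb := b.unitsSMul u
  have hbb : ∀ i, bb i = b.repr v i • e i := by
    intro i
    rw [Module.Basis.unitsSMul_apply, Units.smul_def, ← hb]
    rfl
  have hspan_eq : ∀ s : Set (Fin n),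
      Submodule.span ℂ (⇑bb '' s) = Submodule.span ℂ (e '' s) := by
    intro s
    apply le_antisymm <;> rw [Submodule.span_le] <;> rintro x ⟨j, hj, rfl⟩
    · rw [hbb j]
      exact Submodule.smul_mem _ _ (Submodule.subset_span ⟨j, hj, rfl⟩)
    · have hej : e j = (b.repr v j)⁻¹ • bb j := by
        rw [hbb j, smul_smul, inv_mul_cancel₀ (hc j), one_smul]
      rw [hej]
      exact Submodule.smul_mem _ _ (Submodule.subset_span ⟨j, hj, rfl⟩)
  have hsum : ∑ i, bb i = v := by
    simp only [hbb]
    rw [← hb]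
    exact b.sum_repr v
  refine ⟨bb, ?_, ?_, ?_⟩
  · intro j hj; rw [hspan_eq]; exact (span0 j hj).symm
  · intro j hj; rw [hspan_eq]; exact (span1 j hj).symm
  · rw [hsum]; exact hLv

theorem stmt6 (n : ℕ) (F0 F1 G0 G1 : ℕ → Submodule ℂ (Fin n → ℂ))
    (L M : Submodule ℂ (Fin n → ℂ))
    (hF0 : IsCompleteFlag n F0) (hF1 : IsCompleteFlag n F1)
    (hG0 : IsCompleteFlag n G0) (hG1 : IsCompleteFlag n G1)
    (hL : Module.finrank ℂ L = 1) (hM : Module.finrank ℂ M = 1)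
    (hF : GenPosTriple n F0 F1 L) (hG : GenPosTriple n G0 G1 M) :
    ∃ g : (Fin n → ℂ) ≃ₗ[ℂ] (Fin n → ℂ),
      (∀ j ≤ n, (F0 j).map (g : (Fin n → ℂ) →ₗ[ℂ] (Fin n → ℂ)) = G0 j) ∧
      (∀ j ≤ n, (F1 j).map (g : (Fin n → ℂ) →ₗ[ℂ] (Fin n → ℂ)) = G1 j) ∧
      L.map (g : (Fin n → ℂ) →ₗ[ℂ] (Fin n → ℂ)) = M := by
  obtain ⟨b, hb0, hb1, hbL⟩ := exists_adapted_basis n F0 F1 L hF0 hF1 hL hF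
  obtain ⟨c, hc0, hc1, hcM⟩ := exists_adapted_basis n G0 G1 M hG0 hG1 hM hG
  set g := b.equiv c (Equiv.refl _) with hg
  have hgb : ∀ i, g (b i) = c i := fun i => b.equiv_apply i c _
  have himg : ∀ s : Set (Fin n), ⇑(g : (Fin n → ℂ) →ₗ[ℂ] (Fin n → ℂ)) '' (⇑b '' s) = ⇑c '' s := by
    intro s
    rw [← Set.image_comp]
    exact Set.image_congr fun i _ => by simp [hgb i]
  refine ⟨g, ?_, ?_, ?_⟩
  · intro j hj
    rw [hb0 j hj, Submodule.map_span, himg]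
    exact (hc0 j hj).symm
  · intro j hj
    rw [hb1 j hj, Submodule.map_span, himg]
    exact (hc1 j hj).symm
  · rw [hbL, Submodule.map_span, Set.image_singleton]
    have : (g : (Fin n → ℂ) →ₗ[ℂ] (Fin n → ℂ)) (∑ i, b i) = ∑ i, c i := by
      rw [map_sum]; simp [hgb]
    rw [this]
    exact hcM.symm
end

section
/- The group generated by the translations $z \mapsto z + 2^k \cdot 3i$ and $z \mapsto z + 2^k(3\sqrt{3}/2 + 3i/2)$ for all $k \in \mathbb{Z}$ is dense in the additive group $(\mathbb{C}, +)$. -/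
open Filter Set

lemma real_mul_mem (G : AddSubgroup ℂ) (a : ℂ) (h : ∀ k : ℤ, (2 : ℂ) ^ k * a ∈ G)
    (t : ℝ) : (t : ℂ) * a ∈ G.topologicalClosure := by
  set T := G.topologicalClosure with hT
  let f : ℝ →+ ℂ := (AddMonoidHom.mulRight a).comp Complex.ofRealHom.toAddMonoidHom
  have hf : Continuous f := by
    show Continuous (fun x : ℝ => (x : ℂ) * a)
    exact (Complex.continuous_ofReal.mul continuous_const)
  let H : AddSubgroup ℝ := T.comap f
  have hHc : IsClosed (H : Set ℝ) :=
    (G.isClosed_topologicalClosure).preimage hf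
  have hmem : ∀ m : ℕ, (2 : ℝ) ^ (-(m : ℤ)) ∈ H := by
    intro m
    show f _ ∈ T
    have : f ((2:ℝ) ^ (-(m:ℤ))) = (2:ℂ) ^ (-(m:ℤ)) * a := by
      simp [f]
    rw [this]
    exact G.le_topologicalClosure (h _)
  have hdense : Dense (H : Set ℝ) := by
    apply AddSubgroup.dense_of_not_isolated_zero
    intro ε hε
    obtain ⟨m, hm⟩ := exists_pow_lt_of_lt_one hε (by norm_num : (1:ℝ)/2 < 1)
    exact ⟨(2:ℝ) ^ (-(m:ℤ)), hmem m, by positivity, by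
      rwa [show ((2:ℝ))^(-(m:ℤ)) = (1/2)^m by rw [zpow_neg]; push_cast; simp [one_div, inv_pow]]⟩
  have : t ∈ H := by
    have := hdense.closure_eq
    rw [hHc.closure_eq] at this
    have ht : t ∈ (H : Set ℝ) := this ▸ mem_univ t
    exact ht
  exact this

theorem stmt10 :
    Dense ((AddSubgroup.closure
      {c : ℂ | ∃ k : ℤ, c = (2 : ℂ) ^ k * (3 * Complex.I) ∨
        c = (2 : ℂ) ^ k * (3 * (Real.sqrt 3 : ℂ) / 2 + 3 / 2 * Complex.I)} :
      AddSubgroup ℂ) : Set ℂ) := by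
  set S := {c : ℂ | ∃ k : ℤ, c = (2 : ℂ) ^ k * (3 * Complex.I) ∨
        c = (2 : ℂ) ^ k * (3 * (Real.sqrt 3 : ℂ) / 2 + 3 / 2 * Complex.I)} with hS
  set G := AddSubgroup.closure S with hG
  set a : ℂ := 3 * Complex.I
  set b : ℂ := 3 * (Real.sqrt 3 : ℂ) / 2 + 3 / 2 * Complex.I
  have ha : ∀ k : ℤ, (2:ℂ)^k * a ∈ G := fun k =>
    AddSubgroup.subset_closure ⟨k, Or.inl rfl⟩
  have hb : ∀ k : ℤ, (2:ℂ)^k * b ∈ G := fun k =>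
    AddSubgroup.subset_closure ⟨k, Or.inr rfl⟩
  have key : ∀ z : ℂ, z ∈ G.topologicalClosure := by
    intro z
    set t : ℝ := 2 * z.re * Real.sqrt 3 / 9
    set s : ℝ := z.im / 3 - t / 2
    have hsq : Real.sqrt 3 ^ 2 = 3 := Real.sq_sqrt (by norm_num)
    have hsqC : ((Real.sqrt 3 : ℝ) : ℂ) ^ 2 = 3 := by
      rw [← Complex.ofReal_pow, hsq]; norm_num
    have hz : z = (s : ℂ) * a + (t : ℂ) * b := by
      simp only [a, b, s, t]
      push_cast
      linear_combination (Complex.re_add_im z).symm - ((z.re : ℂ) / 3) * hsqC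
    rw [hz]
    exact add_mem (real_mul_mem G a ha s) (real_mul_mem G b hb t)
  rw [dense_iff_closure_eq]
  exact Set.eq_univ_of_forall key
end
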